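/- Let d ≥ 2 and define S(x) = (1/d) · Σ_{k=1}^d max{x_j : j ≠ k} for x ∈ [0,1]^d. Then the infimum over (β₀, β) ∈ ℝ² of sup_{x ∈ [0,1]^d} |max_i x_i − β₀ − β·S(x)| equals 1/(2d), attained at β₀ = 1/(2d), β = 1. -/

import Mathlib

theorem stmt7 (d : ℕ) (hd : 2 ≤ d)
    (S : (Fin d → ℝ) → ℝ)
    (hS : ∀ x, S x = (1 / (d : ℝ)) *
        ∑ k : Fin d, (Finset.univ.erase k).sup' (Finset.card_pos.mp (by
            rw [Finset.card_erase_of_mem (Finset.mem_univ k), Finset.card_univ,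
              Fintype.card_fin]; omega)) x)
    (E : ℝ → ℝ → ℝ)
    (hE : ∀ β₀ β, E β₀ β = ⨆ x : {x : Fin d → ℝ // ∀ i, x i ∈ Set.Icc (0 : ℝ) 1},
        |Finset.univ.sup' (Finset.univ_nonempty_iff.mpr
            (Fin.pos_iff_nonempty.mp (by omega))) x.1 - β₀ - β * S x.1|) :
    (∀ β₀ β : ℝ, 1 / (2 * d) ≤ E β₀ β) ∧ E (1 / (2 * d)) 1 = 1 / (2 * d) := by
  have hd0 : 0 < d := by omega
  have hne : (Finset.univ : Finset (Fin d)).Nonempty :=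
    Finset.univ_nonempty_iff.mpr (Fin.pos_iff_nonempty.mp hd0)
  have hdR : (2 : ℝ) ≤ (d : ℝ) := by exact_mod_cast hd
  have hd0R : (0 : ℝ) < (d : ℝ) := by linarith
  have herase : ∀ k : Fin d, ((Finset.univ : Finset (Fin d)).erase k).Nonempty := by
    intro k
    apply Finset.card_pos.mp
    rw [Finset.card_erase_of_mem (Finset.mem_univ k), Finset.card_univ, Fintype.card_fin]
    omega
  set M : (Fin d → ℝ) → ℝ := fun x => Finset.univ.sup' hne x with hM
  set T : Fin d → (Fin d → ℝ) → ℝ := fun k x => (Finset.univ.erase k).sup' (herase k) x with hT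
  have hSdef : ∀ x, S x = (1 / (d : ℝ)) * ∑ k : Fin d, T k x := hS
  have hEdef : ∀ β₀ β, E β₀ β =
      ⨆ x : {x : Fin d → ℝ // ∀ i, x i ∈ Set.Icc (0 : ℝ) 1},
        |M x.1 - β₀ - β * S x.1| := hE
  -- basic bounds on the cube
  have hM_le_one : ∀ x : Fin d → ℝ, (∀ i, x i ∈ Set.Icc (0 : ℝ) 1) → M x ≤ 1 := by
    intro x hx
    exact Finset.sup'_le _ _ fun i _ => (hx i).2
  have hM_nonneg : ∀ x : Fin d → ℝ, (∀ i, x i ∈ Set.Icc (0 : ℝ) 1) → 0 ≤ M x := by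
    intro x hx
    obtain ⟨i⟩ := Fin.pos_iff_nonempty.mp hd0
    exact le_trans (hx i).1 (Finset.le_sup' x (Finset.mem_univ i))
  have hT_le_M : ∀ (k : Fin d) (x : Fin d → ℝ), T k x ≤ M x := by
    intro k x
    exact Finset.sup'_le _ _ fun j hj => Finset.le_sup' x (Finset.mem_univ j)
  have hT_nonneg : ∀ (k : Fin d) (x : Fin d → ℝ), (∀ i, x i ∈ Set.Icc (0 : ℝ) 1) →
      0 ≤ T k x := by
    intro k x hx
    obtain ⟨j, hj⟩ := herase k
    exact le_trans (hx j).1 (Finset.le_sup' x hj)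
  -- S ≤ M
  have hS_le_M : ∀ x : Fin d → ℝ, S x ≤ M x := by
    intro x
    rw [hSdef]
    have hsum : ∑ k : Fin d, T k x ≤ (d : ℝ) * M x := by
      calc ∑ k : Fin d, T k x ≤ ∑ _k : Fin d, M x :=
            Finset.sum_le_sum fun k _ => hT_le_M k x
        _ = (d : ℝ) * M x := by
            rw [Finset.sum_const, Finset.card_univ, Fintype.card_fin, nsmul_eq_mul]
    calc (1 / (d : ℝ)) * ∑ k : Fin d, T k x ≤ (1 / (d : ℝ)) * ((d : ℝ) * M x) := by
          apply mul_le_mul_of_nonneg_left hsum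
          positivity
      _ = M x := by field_simp
  -- M - 1/d ≤ S
  have hM_sub_le_S : ∀ x : Fin d → ℝ, (∀ i, x i ∈ Set.Icc (0 : ℝ) 1) →
      M x - 1 / (d : ℝ) ≤ S x := by
    intro x hx
    obtain ⟨i, -, hi⟩ := Finset.exists_mem_eq_sup' hne x
    have hsum : (d : ℝ) * M x - 1 ≤ ∑ k : Fin d, T k x := by
      have h1 : ∑ k ∈ Finset.univ.erase i, T k x + T i x = ∑ k : Fin d, T k x :=
        Finset.sum_erase_add _ _ (Finset.mem_univ i)
      have h2 : ((d : ℝ) - 1) * M x ≤ ∑ k ∈ Finset.univ.erase i, T k x := by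
        have : ∀ k ∈ Finset.univ.erase i, M x ≤ T k x := by
          intro k hk
          have hki : k ≠ i := (Finset.mem_erase.mp hk).1
          have : i ∈ Finset.univ.erase k := Finset.mem_erase.mpr ⟨Ne.symm hki, Finset.mem_univ i⟩
          calc M x = x i := hi
            _ ≤ T k x := Finset.le_sup' x this
        calc ((d : ℝ) - 1) * M x = ∑ _k ∈ Finset.univ.erase i, M x := by
              rw [Finset.sum_const, Finset.card_erase_of_mem (Finset.mem_univ i),
                Finset.card_univ, Fintype.card_fin, nsmul_eq_mul]
              push_cast [Nat.cast_sub (by omega : 1 ≤ d)]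
              ring
          _ ≤ ∑ k ∈ Finset.univ.erase i, T k x := Finset.sum_le_sum this
      have h3 : (0 : ℝ) ≤ T i x := hT_nonneg i x hx
      have h4 : M x ≤ 1 := hM_le_one x hx
      nlinarith
    rw [hSdef]
    have h := mul_le_mul_of_nonneg_left hsum (le_of_lt (one_div_pos.mpr hd0R))
    have heq : 1 / (d : ℝ) * ((d : ℝ) * M x - 1) = M x - 1 / (d : ℝ) := by
      field_simp
    linarith
  -- S bounds
  have hS_nonneg : ∀ x : Fin d → ℝ, (∀ i, x i ∈ Set.Icc (0 : ℝ) 1) → 0 ≤ S x := by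
    intro x hx
    rw [hSdef]
    have : 0 ≤ ∑ k : Fin d, T k x := Finset.sum_nonneg fun k _ => hT_nonneg k x hx
    positivity
  have hS_le_one : ∀ x : Fin d → ℝ, (∀ i, x i ∈ Set.Icc (0 : ℝ) 1) → S x ≤ 1 := by
    intro x hx
    exact le_trans (hS_le_M x) (hM_le_one x hx)
  -- the index type is nonempty
  haveI : Nonempty {x : Fin d → ℝ // ∀ i, x i ∈ Set.Icc (0 : ℝ) 1} :=
    ⟨⟨fun _ => 0, fun i => ⟨le_refl 0, zero_le_one⟩⟩⟩
  -- boundedness of the families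
  have hbdd : ∀ β₀ β : ℝ, BddAbove (Set.range fun x :
      {x : Fin d → ℝ // ∀ i, x i ∈ Set.Icc (0 : ℝ) 1} => |M x.1 - β₀ - β * S x.1|) := by
    intro β₀ β
    refine ⟨1 + |β₀| + |β|, ?_⟩
    rintro y ⟨x, rfl⟩
    have h1 : |M x.1| ≤ 1 := abs_le.mpr ⟨by linarith [hM_nonneg x.1 x.2], hM_le_one x.1 x.2⟩
    have h2 : |S x.1| ≤ 1 := abs_le.mpr ⟨by linarith [hS_nonneg x.1 x.2], hS_le_one x.1 x.2⟩
    calc |M x.1 - β₀ - β * S x.1| ≤ |M x.1| + |β₀| + |β * S x.1| := by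
          have := abs_sub (M x.1 - β₀) (β * S x.1)
          have := abs_sub (M x.1) β₀
          linarith
      _ ≤ 1 + |β₀| + |β| := by
          rw [abs_mul]
          have : |β| * |S x.1| ≤ |β| * 1 := mul_le_mul_of_nonneg_left h2 (abs_nonneg β)
          linarith
  -- evaluation points for the lower bound
  have key : ∀ β₀ β : ℝ, 1 / (2 * (d : ℝ)) ≤ E β₀ β := by
    intro β₀ β
    rw [hEdef]
    -- point a : constant (d-1)/d vector
    have ha_mem : ∀ i : Fin d, ((d : ℝ) - 1) / d ∈ Set.Icc (0 : ℝ) 1 := by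
      intro i
      constructor
      · exact div_nonneg (by linarith) (le_of_lt hd0R)
      · rw [div_le_one hd0R]; linarith
    set a : Fin d → ℝ := fun _ => ((d : ℝ) - 1) / d with haa
    have hMa : M a = ((d : ℝ) - 1) / d := Finset.sup'_const _ _
    have hTa : ∀ k, T k a = ((d : ℝ) - 1) / d := fun k => Finset.sup'_const _ _
    have hSa : S a = ((d : ℝ) - 1) / d := by
      rw [hSdef]
      simp only [hTa, Finset.sum_const, Finset.card_univ, Fintype.card_fin, nsmul_eq_mul]
      field_simp
    -- point b : indicator of coordinate 0
    set i0 : Fin d := ⟨0, hd0⟩ with hi0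
    set b : Fin d → ℝ := fun j => if j = i0 then 1 else 0 with hbb
    have hb_mem : ∀ i : Fin d, b i ∈ Set.Icc (0 : ℝ) 1 := by
      intro i
      by_cases h : i = i0 <;> simp [hbb, h]
    have hMb : M b = 1 := by
      apply le_antisymm
      · exact Finset.sup'_le _ _ fun j _ => (hb_mem j).2
      · calc (1 : ℝ) = b i0 := by simp [hbb]
          _ ≤ M b := Finset.le_sup' b (Finset.mem_univ i0)
    have hTb : ∀ k : Fin d, T k b = if k = i0 then 0 else 1 := by
      intro k
      by_cases h : k = i0
      · rw [if_pos h]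
        apply le_antisymm
        · apply Finset.sup'_le
          intro j hj
          have hj' : j ≠ i0 := h ▸ (Finset.mem_erase.mp hj).1
          simp [hbb, hj']
        · obtain ⟨j, hj⟩ := herase k
          have hj' : j ≠ i0 := h ▸ (Finset.mem_erase.mp hj).1
          calc (0 : ℝ) = b j := by simp [hbb, hj']
            _ ≤ T k b := Finset.le_sup' b hj
      · rw [if_neg h]
        apply le_antisymm
        · exact Finset.sup'_le _ _ fun j _ => (hb_mem j).2
        · have hmem : i0 ∈ Finset.univ.erase k :=
            Finset.mem_erase.mpr ⟨fun hc => h hc.symm, Finset.mem_univ i0⟩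
          calc (1 : ℝ) = b i0 := by simp [hbb]
            _ ≤ T k b := Finset.le_sup' b hmem
    have hSb : S b = ((d : ℝ) - 1) / d := by
      rw [hSdef]
      have hsum : ∑ k : Fin d, T k b = (d : ℝ) - 1 := by
        have hterm : ∀ k : Fin d, T k b = 1 - (if k = i0 then (1 : ℝ) else 0) := by
          intro k
          rw [hTb k]
          by_cases h : k = i0 <;> simp [h]
        rw [Finset.sum_congr rfl fun k _ => hterm k, Finset.sum_sub_distrib,
          Finset.sum_const, Finset.card_univ, Fintype.card_fin,
          Finset.sum_ite_eq' Finset.univ i0 (fun _ => (1 : ℝ))]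
        simp
      rw [hsum]
      field_simp
    -- both errors are bounded by the sup
    set X : ℝ := ⨆ x : {x : Fin d → ℝ // ∀ i, x i ∈ Set.Icc (0 : ℝ) 1},
        |M x.1 - β₀ - β * S x.1| with hX
    have ea_le : |M a - β₀ - β * S a| ≤ X :=
      le_ciSup (hbdd β₀ β) (⟨a, fun i => ha_mem i⟩ :
        {x : Fin d → ℝ // ∀ i, x i ∈ Set.Icc (0 : ℝ) 1})
    have eb_le : |M b - β₀ - β * S b| ≤ X :=
      le_ciSup (hbdd β₀ β) (⟨b, hb_mem⟩ :
        {x : Fin d → ℝ // ∀ i, x i ∈ Set.Icc (0 : ℝ) 1})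
    rw [hMa, hSa] at ea_le
    rw [hMb, hSb] at eb_le
    have habs : (1 : ℝ) / d ≤ |1 - β₀ - β * (((d : ℝ) - 1) / d)| +
        |((d : ℝ) - 1) / d - β₀ - β * (((d : ℝ) - 1) / d)| := by
      have hdiff : (1 - β₀ - β * (((d : ℝ) - 1) / d)) -
          (((d : ℝ) - 1) / d - β₀ - β * (((d : ℝ) - 1) / d)) = 1 / d := by
        field_simp
        ring
      calc (1 : ℝ) / d = |(1 - β₀ - β * (((d : ℝ) - 1) / d)) -
            (((d : ℝ) - 1) / d - β₀ - β * (((d : ℝ) - 1) / d))| := by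
            rw [hdiff, abs_of_nonneg (by positivity)]
        _ ≤ _ := abs_sub _ _
    have h2E : 1 / (d : ℝ) ≤ 2 * X := by linarith
    rw [div_le_iff₀ (by linarith : (0 : ℝ) < 2 * d)]
    rw [div_le_iff₀ hd0R] at h2E
    nlinarith
  refine ⟨fun β₀ β => key β₀ β, ?_⟩
  -- upper bound part
  rw [hEdef]
  have hhalf : 1 / (2 * (d : ℝ)) + 1 / (2 * (d : ℝ)) = 1 / (d : ℝ) := by
    rw [← two_mul, one_div (2 * (d : ℝ)), mul_inv, ← mul_assoc,
      mul_inv_cancel₀ (two_ne_zero), one_mul, one_div]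
  apply le_antisymm
  · apply ciSup_le
    intro x
    have h1 : S x.1 ≤ M x.1 := hS_le_M x.1
    have h2 : M x.1 - 1 / (d : ℝ) ≤ S x.1 := hM_sub_le_S x.1 x.2
    rw [one_mul, abs_le]
    constructor <;> linarith
  · set z : {x : Fin d → ℝ // ∀ i, x i ∈ Set.Icc (0 : ℝ) 1} :=
      ⟨fun _ => 0, fun i => ⟨le_refl 0, zero_le_one⟩⟩ with hz
    have hMz : M z.1 = 0 := Finset.sup'_const _ _
    have hSz : S z.1 = 0 := by
      rw [hSdef]
      have : ∀ k : Fin d, T k z.1 = 0 := fun k => Finset.sup'_const _ _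
      rw [Finset.sum_congr rfl fun k _ => this k]
      simp
    calc 1 / (2 * (d : ℝ)) = |M z.1 - 1 / (2 * (d : ℝ)) - 1 * S z.1| := by
          rw [hMz, hSz]
          have : (0 : ℝ) - 1 / (2 * (d : ℝ)) - 1 * 0 = -(1 / (2 * (d : ℝ))) := by ring
          rw [this, abs_neg, abs_of_nonneg (by positivity)]
      _ ≤ _ := le_ciSup (hbdd (1 / (2 * (d : ℝ))) 1) z
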